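/- Let n ≥ 1 and let U ⊆ ℝⁿ be open. Let A : U → ℝ^{n×n} be continuously differentiable with A(x) symmetric and positive definite for every x ∈ U, let b, c : U → ℝ with c(x) ≥ 0 on U, let μ ∈ ℝ, and let u : U → ℝ be twice continuously differentiable with u(x) > 0 on U and satisfying −div(x ↦ A(x)∇u(x)) + b(x)·u(x) = μ·c(x)·u(x) on U. Define F : U → ℝⁿ by F(x) = −A(x)∇u(x)/u(x). Then for every λ ≤ μ, every x ∈ U, every y ∈ ℝ and every z ∈ ℝⁿ: ⟨z, A(x)z⟩ + (b(x) − λ·c(x))·y² + (div F)(x)·y² + 2y·⟨F(x), z⟩ ≥ 0. -/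

import Mathlib

open Set Matrix

/-- The gradient of a scalar function on `ℝⁿ`, as the vector of partial derivatives. -/
noncomputable def pgrad {n : ℕ} (u : (Fin n → ℝ) → ℝ) (x : Fin n → ℝ) : Fin n → ℝ :=
  fun i => fderiv ℝ u x (Pi.single i 1)

/-- The divergence of a vector field on `ℝⁿ`: `div G (x) = Σᵢ ∂Gᵢ/∂xᵢ (x)`. -/
noncomputable def pdiv {n : ℕ} (G : (Fin n → ℝ) → (Fin n → ℝ)) (x : Fin n → ℝ) : ℝ :=
  ∑ i, fderiv ℝ G x (Pi.single i 1) i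

theorem stmt_8
    (n : ℕ) (hn : 1 ≤ n)
    (U : Set (Fin n → ℝ)) (hU : IsOpen U)
    (A : (Fin n → ℝ) → Matrix (Fin n) (Fin n) ℝ)
    (hA : ∀ i j, ContDiffOn ℝ 1 (fun x => A x i j) U)
    (hAsymm : ∀ x ∈ U, (A x).IsSymm)
    (hApos : ∀ x ∈ U, (A x).PosDef)
    (b c : (Fin n → ℝ) → ℝ) (hc : ∀ x ∈ U, 0 ≤ c x)
    (μ : ℝ)
    (u : (Fin n → ℝ) → ℝ) (hu : ContDiffOn ℝ 2 u U) (hupos : ∀ x ∈ U, 0 < u x)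
    (hPDE : ∀ x ∈ U,
      -pdiv (fun x' => (A x').mulVec (pgrad u x')) x + b x * u x = μ * c x * u x)
    (F : (Fin n → ℝ) → (Fin n → ℝ))
    (hF : ∀ x ∈ U, F x = fun i => -((A x).mulVec (pgrad u x) i) / u x)
    (l : ℝ) (hl : l ≤ μ)
    (x : Fin n → ℝ) (hx : x ∈ U) (y : ℝ) (z : Fin n → ℝ) :
    (∑ i, z i * (A x).mulVec z i) + (b x - l * c x) * y^2 + pdiv F x * y^2
      + 2 * y * (∑ i, F x i * z i) ≥ 0 := by
  have hUx : U ∈ nhds x := hU.mem_nhds hx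
  have hu0 : 0 < u x := hupos x hx
  have hune : u x ≠ 0 := ne_of_gt hu0
  set g : Fin n → ℝ := pgrad u x with hg
  set v : Fin n → ℝ := (A x).mulVec g with hv
  set G : (Fin n → ℝ) → (Fin n → ℝ) := fun x' => (A x').mulVec (pgrad u x') with hGdef
  -- differentiability of u
  have hu2 : ContDiffAt ℝ 2 u x := hu.contDiffAt hUx
  have hud : DifferentiableAt ℝ u x := hu2.differentiableAt (by norm_num)
  -- differentiability of the gradient components
  have hgrad1 : ContDiffAt ℝ 1 (fderiv ℝ u) x := hu2.fderiv_right (by norm_num)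
  have hgi : ∀ i, DifferentiableAt ℝ (fun x' => pgrad u x' i) x := by
    intro i
    have h1 : DifferentiableAt ℝ (fderiv ℝ u) x := hgrad1.differentiableAt (by norm_num)
    exact h1.clm_apply (differentiableAt_const _)
  -- differentiability of A entries at x
  have hAd : ∀ i j, DifferentiableAt ℝ (fun x' => A x' i j) x := fun i j =>
    ((hA i j).contDiffAt hUx).differentiableAt (by norm_num)
  -- differentiability of G components
  have hGi : ∀ i, DifferentiableAt ℝ (fun x' => G x' i) x := by
    intro i
    have : (fun x' => G x' i) = fun x' => ∑ j, A x' i j * pgrad u x' j := by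
      funext x'
      simp [hGdef, Matrix.mulVec, dotProduct]
    rw [this]
    exact DifferentiableAt.fun_sum fun j _ => (hAd i j).mul (hgi j)
  -- divergence of G from the PDE
  have hdivG : pdiv G x = (b x - μ * c x) * u x := by
    have := hPDE x hx; linarith [this]
  -- pdiv G as sum of component derivatives
  have hGpi : fderiv ℝ G x
      = ContinuousLinearMap.pi (fun i => fderiv ℝ (fun x' => G x' i) x) := fderiv_pi hGi
  have hpdivG : pdiv G x = ∑ i, fderiv ℝ (fun x' => G x' i) x (Pi.single i 1) := by
    unfold pdiv
    rw [hGpi]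
    simp
  -- F agrees with the explicit formula near x
  set φ : (Fin n → ℝ) → (Fin n → ℝ) := fun x' i => -(G x' i) / u x' with hφ
  have hFφ : F =ᶠ[nhds x] φ := by
    filter_upwards [hUx] with x' hx'
    rw [hF x' hx']
  -- derivative of each φ component
  have huinv : HasFDerivAt (fun x' => (u x')⁻¹) ((-(u x ^ 2)⁻¹) • fderiv ℝ u x) x :=
    (hasDerivAt_inv hune).comp_hasFDerivAt x hud.hasFDerivAt
  have hφi : ∀ i, HasFDerivAt (fun x' => φ x' i)
      ((-(G x i)) • ((-(u x ^ 2)⁻¹) • fderiv ℝ u x)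
        + (u x)⁻¹ • fderiv ℝ (fun x' => -(G x' i)) x) x := by
    intro i
    have h1 : HasFDerivAt (fun x' => -(G x' i)) (fderiv ℝ (fun x' => -(G x' i)) x) x :=
      ((hGi i).neg).hasFDerivAt
    have := h1.fun_mul huinv
    rw [show (fun x' => φ x' i) = fun x' => -(G x' i) * (u x')⁻¹ from
      funext fun x' => by simp [hφ, div_eq_mul_inv]]
    convert this using 1
  have hφid : ∀ i, DifferentiableAt ℝ (fun x' => φ x' i) x :=
    fun i => (hφi i).differentiableAt
  have hφpi : fderiv ℝ φ x
      = ContinuousLinearMap.pi (fun i => fderiv ℝ (fun x' => φ x' i) x) := fderiv_pi hφid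
  -- compute pdiv F
  have hcomp : ∀ i, (fderiv ℝ (fun x' => φ x' i) x) (Pi.single i 1)
      = G x i * g i / (u x)^2 - fderiv ℝ (fun x' => G x' i) x (Pi.single i 1) / u x := by
    intro i
    rw [(hφi i).fderiv]
    have hneg : fderiv ℝ (fun x' => -(G x' i)) x = -fderiv ℝ (fun x' => G x' i) x :=
      fderiv_neg (f := fun x' => G x' i)
    have hgdef : fderiv ℝ u x (Pi.single i 1) = g i := rfl
    simp [hneg, hgdef]
    field_simp
    ring
  have hpdivF : pdiv F x = (v ⬝ᵥ g) / (u x)^2 - (pdiv G x) / u x := by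
    rw [hpdivG]
    unfold pdiv
    rw [hFφ.fderiv_eq, hφpi]
    simp only [ContinuousLinearMap.pi_apply]
    rw [Finset.sum_congr rfl (fun i _ => hcomp i)]
    rw [Finset.sum_sub_distrib, ← Finset.sum_div, ← Finset.sum_div]
    congr 1
  -- the linear term
  have hlin : (∑ i, F x i * z i) = -(v ⬝ᵥ z) / u x := by
    rw [hF x hx]
    have h1 : ∀ i ∈ Finset.univ, -((A x).mulVec (pgrad u x) i) / u x * z i
        = -(v i * z i / u x) := by
      intro i _; rw [hv]; ring
    rw [Finset.sum_congr rfl h1, Finset.sum_neg_distrib, ← Finset.sum_div, neg_div]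
    rfl
  -- the quadratic term
  have hquad : (∑ i, z i * (A x).mulVec z i) = z ⬝ᵥ (A x).mulVec z := rfl
  -- symmetry fact
  have hsymm : g ⬝ᵥ (A x).mulVec z = v ⬝ᵥ z := by
    rw [Matrix.dotProduct_mulVec, hv, ← Matrix.mulVec_transpose, (hAsymm x hx).eq]
  -- positivity of the quadratic form on w
  set w : Fin n → ℝ := z - (y / u x) • g with hw
  have hpos : 0 ≤ w ⬝ᵥ (A x).mulVec w := by
    have := (hApos x hx).posSemidef.re_dotProduct_nonneg w
    simpa using this
  have hwexp : w ⬝ᵥ (A x).mulVec w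
      = z ⬝ᵥ (A x).mulVec z - 2 * (y / u x) * (v ⬝ᵥ z) + (y / u x)^2 * (v ⬝ᵥ g) := by
    rw [hw, Matrix.mulVec_sub, Matrix.mulVec_smul]
    rw [sub_dotProduct, dotProduct_sub, dotProduct_sub]
    rw [smul_dotProduct, dotProduct_smul, dotProduct_smul]
    rw [smul_dotProduct]
    rw [hsymm, dotProduct_comm z ((A x).mulVec g), ← hv]
    simp [smul_eq_mul]
    rw [dotProduct_comm g v]
    ring
  -- final algebra
  rw [hquad, hpdivF, hdivG, hlin]
  have hcx := hc x hx
  have key : z ⬝ᵥ (A x).mulVec z + (b x - l * c x) * y ^ 2 +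
      ((v ⬝ᵥ g) / u x ^ 2 - (b x - μ * c x) * u x / u x) * y ^ 2 +
      2 * y * (-(v ⬝ᵥ z) / u x)
      = (μ - l) * c x * y^2 + w ⬝ᵥ (A x).mulVec w := by
    rw [hwexp]
    field_simp
    ring
  rw [key]
  have hnn : 0 ≤ (μ - l) * c x * y^2 :=
    mul_nonneg (mul_nonneg (by linarith) hcx) (sq_nonneg y)
  linarith
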